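/- Let P be a configuration of m points p_1, ..., p_m in ℂP^n that is essential (the points span ℂP^n) and irreducible (P is not contained in the union of two disjoint proper linear subspaces each meeting P). Then there exists a weight vector a ∈ ℝ^m with all a_i > 0 such that for every nonempty proper linear subspace W ⊂ ℂP^n: ∑_{i : p_i ∈ W} a_i < ((dim W + 1)/(n+1)) · ∑_{i=1}^m a_i. -/

import Mathlib

open scoped Classical

namespace Stmt19Aux

variable {n m : ℕ} (p : Fin m → (Fin (n + 1) → ℂ))

/-- Choose an index mapping to a given vector, if one exists. -/
noncomputable def pick (hm : 0 < m) (v : Fin (n + 1) → ℂ) : Fin m :=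
  if h : ∃ i, p i = v then h.choose else ⟨0, hm⟩

lemma pick_spec (hm : 0 < m) {v : Fin (n + 1) → ℂ} (h : ∃ i, p i = v) :
    p (pick p hm v) = v := by
  rw [pick, dif_pos h]; exact h.choose_spec

/-- Convert a finite set of vectors contained in the range of `p` into a finset of indices. -/
lemma set_to_idx (hm : 0 < m) {b : Set (Fin (n + 1) → ℂ)} (hfin : b.Finite)
    (hbr : b ⊆ Set.range p) :
    ∃ s : Finset (Fin m), p '' ↑s = b ∧ Set.InjOn p ↑s ∧ s.card = hfin.toFinset.card := by
  have hid : ∀ v ∈ b, p (pick p hm v) = v := by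
    intro v hv
    exact pick_spec p hm (hbr hv)
  refine ⟨hfin.toFinset.image (pick p hm), ?_, ?_, ?_⟩
  · rw [Finset.coe_image, hfin.coe_toFinset, ← Set.image_comp]
    ext v
    constructor
    · rintro ⟨u, hu, rfl⟩
      simpa [Function.comp, hid u hu] using hu
    · intro hv
      exact ⟨v, hv, by simp [Function.comp, hid v hv]⟩
  · rw [Finset.coe_image, hfin.coe_toFinset]
    rintro x ⟨u, hu, rfl⟩ y ⟨w, hw, rfl⟩ hxy
    rw [hid u hu, hid w hw] at hxy
    rw [hxy]
  · apply Finset.card_image_of_injOn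
    intro x hx y hy hxy
    simp only [Finset.mem_coe, hfin.mem_toFinset] at hx hy
    rw [← hid x hx, ← hid y hy, hxy]

/-- Independence of an index family from independence of the image set. -/
lemma indep_of_set {s : Finset (Fin m)} {b : Set (Fin (n + 1) → ℂ)}
    (him : p '' ↑s = b) (hinj : Set.InjOn p ↑s)
    (hb : LinearIndependent ℂ (fun x : b => (x : Fin (n + 1) → ℂ))) :
    LinearIndependent ℂ (fun i : s => p i) := by
  have hf : ∀ i : s, p i ∈ b := fun i => him ▸ ⟨(i : Fin m), i.2, rfl⟩
  have := hb.comp (fun i : s => (⟨p i, hf i⟩ : b)) ?_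
  · exact this
  · intro i j hij
    have h' : p i = p j := congrArg Subtype.val hij
    exact Subtype.ext (hinj i.2 j.2 h')

lemma injOn_of_indep {s : Finset (Fin m)}
    (hs : LinearIndependent ℂ (fun i : s => p i)) : Set.InjOn p ↑s := by
  intro x hx y hy h
  have := hs.injective (a₁ := ⟨x, hx⟩) (a₂ := ⟨y, hy⟩) h
  exact congrArg Subtype.val this

/-- Any independent index set extends to an index basis. -/
lemma extend_idx (hm : 0 < m) (hess : Submodule.span ℂ (Set.range p) = ⊤)
    (s : Finset (Fin m)) (hs : LinearIndependent ℂ (fun i : s => p i)) :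
    ∃ B : Finset (Fin m), s ⊆ B ∧ B.card = n + 1 ∧
      LinearIndependent ℂ (fun i : B => p i) := by
  have hinj : Set.InjOn p ↑s := injOn_of_indep p hs
  have hset : LinearIndependent ℂ (fun x : (p '' ↑s) => (x : Fin (n + 1) → ℂ)) :=
    (linearIndepOn_iff_image hinj).mp hs
  have hsub : p '' ↑s ⊆ Set.range p := by rintro v ⟨i, _, rfl⟩; exact ⟨i, rfl⟩
  obtain ⟨b, hbt, hsb, hspanb, hbind⟩ := (exists_linearIndepOn_id_extension hset hsub :
    ∃ b ⊆ Set.range p, p '' ↑s ⊆ b ∧ Set.range p ⊆ Submodule.span ℂ b ∧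
      LinearIndependent ℂ (fun x : b => (x : Fin (n + 1) → ℂ)))
  have hfinb : Finite b := hbind.finite
  have hfin : b.Finite := b.toFinite
  have hspan : Submodule.span ℂ b = ⊤ := by
    rw [← top_le_iff, ← hess, Submodule.span_le]; exact hspanb
  haveI : Fintype b := hfin.fintype
  have hcard : hfin.toFinset.card = n + 1 := by
    have hbasis : Module.Basis b ℂ (Fin (n + 1) → ℂ) :=
      Module.Basis.mk hbind (by simp only [id_eq]; rw [Subtype.range_coe, hspan])
    have h1 : Module.finrank ℂ (Fin (n + 1) → ℂ) = Fintype.card b :=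
      Module.finrank_eq_card_basis hbasis
    have h2 : Module.finrank ℂ (Fin (n + 1) → ℂ) = n + 1 := by
      simp [Module.finrank_pi]
    rw [Set.Finite.card_toFinset, ← h1, h2]
  -- indices for b \ p '' s
  have hfin2 : (b \ p '' ↑s).Finite := hfin.subset Set.diff_subset
  obtain ⟨s₂, him2, hinj2, -⟩ := set_to_idx p hm hfin2 ((Set.diff_subset).trans hbt)
  have hims2 : ∀ i ∈ s₂, p i ∈ b \ p '' ↑s := by
    intro i hi; rw [← him2]; exact ⟨i, hi, rfl⟩
  have himB : p '' ↑(s ∪ s₂) = b := by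
    rw [Finset.coe_union, Set.image_union, him2, Set.union_diff_cancel hsb]
  have hinjB : Set.InjOn p ↑(s ∪ s₂) := by
    rw [Finset.coe_union]
    rintro x (hx | hx) y (hy | hy) hxy
    · exact hinj hx hy hxy
    · exfalso
      have h1 : p x ∈ p '' ↑s := ⟨x, hx, rfl⟩
      have h2 := hims2 y hy
      rw [hxy] at h1
      exact h2.2 h1
    · exfalso
      have h1 : p y ∈ p '' ↑s := ⟨y, hy, rfl⟩
      have h2 := hims2 x hx
      rw [← hxy] at h1
      exact h2.2 h1
    · exact hinj2 hx hy hxy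
  refine ⟨s ∪ s₂, Finset.subset_union_left, ?_, ?_⟩
  · have h1 : ((s ∪ s₂).image p).card = (s ∪ s₂).card :=
      Finset.card_image_of_injOn hinjB
    have h2 : (s ∪ s₂).image p = hfin.toFinset := by
      apply Finset.coe_injective
      rw [Finset.coe_image, himB, hfin.coe_toFinset]
    rw [← h1, h2, hcard]
  · exact indep_of_set p himB hinjB hbind

/-- Per-basis count bound: an independent family has at most `finrank W` members in `W`. -/
lemma count_le {B : Finset (Fin m)} (hB : LinearIndependent ℂ (fun i : B => p i))
    (W : Submodule ℂ (Fin (n + 1) → ℂ)) :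
    (B.filter (fun i => p i ∈ W)).card ≤ Module.finrank ℂ W := by
  set F := B.filter (fun i => p i ∈ W) with hF
  have hsubW : ∀ i : F, p i ∈ W := fun i => (Finset.mem_filter.mp i.2).2
  have hFB : ∀ i : F, (i : Fin m) ∈ B := fun i => (Finset.mem_filter.mp i.2).1
  have hind : LinearIndependent ℂ (fun i : F => p i) :=
    hB.comp (fun i : F => (⟨(i : Fin m), hFB i⟩ : B))
      (fun i j h => Subtype.ext (Subtype.mk_eq_mk.mp h))
  have hind2 : LinearIndependent ℂ (fun i : F => (⟨p i, hsubW i⟩ : W)) :=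
    LinearIndependent.of_comp W.subtype hind
  simpa [Fintype.card_coe] using hind2.fintype_card_le_finrank

/-- The key lemma: irreducibility yields a basis meeting `W` in strictly fewer than
`finrank W` points. -/
lemma strict_basis (hm : 0 < m) (hess : Submodule.span ℂ (Set.range p) = ⊤)
    (hirr : ¬∃ U V : Submodule ℂ (Fin (n + 1) → ℂ), U ⊓ V = ⊥ ∧
      (∀ i, p i ∈ U ∨ p i ∈ V) ∧ (∃ i, p i ∈ U) ∧ (∃ i, p i ∈ V))
    {W : Submodule ℂ (Fin (n + 1) → ℂ)} (hWt : W ≠ ⊤) (hex : ∃ i, p i ∈ W) :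
    ∃ B : Finset (Fin m), B.card = n + 1 ∧ LinearIndependent ℂ (fun i : B => p i) ∧
      (B.filter (fun i => p i ∈ W)).card + 1 ≤ Module.finrank ℂ W := by
  set T : Set (Fin (n + 1) → ℂ) := Set.range p \ ↑W with hT
  set Vs : Submodule ℂ (Fin (n + 1) → ℂ) := Submodule.span ℂ T with hVs
  have hexV : ∃ i, p i ∉ W := by
    by_contra h
    push_neg at h
    apply hWt
    rw [← top_le_iff, ← hess, Submodule.span_le]
    rintro v ⟨i, rfl⟩
    exact h i
  have hTV : ∀ i, p i ∉ W → p i ∈ Vs := fun i hi =>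
    Submodule.subset_span ⟨⟨i, rfl⟩, hi⟩
  have htop : Module.finrank ℂ (Fin (n + 1) → ℂ) = n + 1 := by
    simp [Module.finrank_pi]
  have hrk : n + 2 ≤ Module.finrank ℂ W + Module.finrank ℂ Vs := by
    by_contra hlt
    push_neg at hlt
    have hsup : W ⊔ Vs = ⊤ := by
      rw [← top_le_iff, ← hess, Submodule.span_le]
      rintro v ⟨i, rfl⟩
      by_cases hw : p i ∈ W
      · exact Submodule.mem_sup_left hw
      · exact Submodule.mem_sup_right (hTV i hw)
    have h1 := Submodule.finrank_sup_add_finrank_inf_eq W Vs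
    rw [hsup] at h1
    have h2 : Module.finrank ℂ (⊤ : Submodule ℂ (Fin (n + 1) → ℂ)) = n + 1 := by
      rw [finrank_top, htop]
    have hint : Module.finrank ℂ ↥(W ⊓ Vs) = 0 := by omega
    have hbot : W ⊓ Vs = ⊥ := Submodule.finrank_eq_zero.mp hint
    exact hirr ⟨W, Vs, hbot,
      fun i => by
        by_cases hw : p i ∈ W
        · exact Or.inl hw
        · exact Or.inr (hTV i hw),
      hex, ⟨hexV.choose, hTV _ hexV.choose_spec⟩⟩
  obtain ⟨b, hbT, hbspan, hbind⟩ := exists_linearIndependent ℂ T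
  have hfinb : Finite b := hbind.finite
  have hfin : b.Finite := b.toFinite
  have hbr : b ⊆ Set.range p := hbT.trans Set.diff_subset
  obtain ⟨s, hsim, hsinj, hscard⟩ := set_to_idx p hm hfin hbr
  have hsind := indep_of_set p hsim hsinj hbind
  obtain ⟨B, hsB, hBcard, hBind⟩ := extend_idx p hm hess s hsind
  refine ⟨B, hBcard, hBind, ?_⟩
  haveI : Fintype b := hfin.fintype
  have hVsrank : Module.finrank ℂ Vs = s.card := by
    rw [hVs, ← hbspan, finrank_span_set_eq_card hbind, hscard,
      Set.Finite.card_toFinset, Set.toFinset_card]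
  have hVsle : Module.finrank ℂ Vs ≤ n + 1 := by
    have := Submodule.finrank_le Vs
    rwa [htop] at this
  have hfsub : B.filter (fun i => p i ∈ W) ⊆ B \ s := by
    intro i hi
    rw [Finset.mem_filter] at hi
    rw [Finset.mem_sdiff]
    refine ⟨hi.1, fun his => ?_⟩
    have : p i ∈ b := by rw [← hsim]; exact ⟨i, his, rfl⟩
    exact (hbT this).2 hi.2
  have hcf : (B.filter (fun i => p i ∈ W)).card ≤ B.card - s.card := by
    calc (B.filter (fun i => p i ∈ W)).card ≤ (B \ s).card := Finset.card_le_card hfsub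
      _ = B.card - s.card := Finset.card_sdiff_of_subset hsB
  have hscB : s.card ≤ B.card := Finset.card_le_card hsB
  omega

end Stmt19Aux

open Stmt19Aux in
/-- A configuration of points `p₁, ..., p_m` in `ℂP^n` (given by nonzero vectors of `ℂ^{n+1}`)
that is essential (the points span) and irreducible (not contained in the union of two
disjoint subspaces each meeting the configuration) admits a positive weight vector `a` making
it stable: for every nonempty proper linear subspace `W`,
`∑_{i : pᵢ ∈ W} aᵢ < ((dim W + 1)/(n+1)) ∑ᵢ aᵢ` (with `dim W + 1` the linear dimension). -/
theorem stmt_19 (n m : ℕ) (p : Fin m → (Fin (n + 1) → ℂ))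
    (hp : ∀ i, p i ≠ 0)
    (hess : Submodule.span ℂ (Set.range p) = ⊤)
    (hirr : ¬∃ U V : Submodule ℂ (Fin (n + 1) → ℂ), U ⊓ V = ⊥ ∧
      (∀ i, p i ∈ U ∨ p i ∈ V) ∧ (∃ i, p i ∈ U) ∧ (∃ i, p i ∈ V)) :
    ∃ a : Fin m → ℝ, (∀ i, 0 < a i) ∧
      ∀ W : Submodule ℂ (Fin (n + 1) → ℂ), W ≠ ⊥ → W ≠ ⊤ →
        ∑ i ∈ Finset.univ.filter (fun i => p i ∈ W), a i
          < ((Module.finrank ℂ W : ℝ) / (n + 1)) * ∑ i, a i := by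
  classical
  have hm : 0 < m := by
    rcases Nat.eq_zero_or_pos m with h | h
    · exfalso
      subst h
      rw [Set.range_eq_empty, Submodule.span_empty] at hess
      exact bot_ne_top hess
    · exact h
  set 𝓑 : Finset (Finset (Fin m)) :=
    Finset.univ.filter
      (fun B => B.card = n + 1 ∧ LinearIndependent ℂ (fun i : B => p i)) with h𝓑
  have hBmem : ∀ B ∈ 𝓑, B.card = n + 1 ∧ LinearIndependent ℂ (fun i : B => p i) := by
    intro B hB
    rw [h𝓑, Finset.mem_filter] at hB
    exact hB.2
  have hBmem' : ∀ B : Finset (Fin m), B.card = n + 1 →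
      LinearIndependent ℂ (fun i : B => p i) → B ∈ 𝓑 := by
    intro B h1 h2
    rw [h𝓑, Finset.mem_filter]
    exact ⟨Finset.mem_univ B, h1, h2⟩
  have hcov : ∀ i, ∃ B ∈ 𝓑, i ∈ B := by
    intro i
    have hsind : LinearIndependent ℂ (fun j : ({i} : Finset (Fin m)) => p j) := by
      apply indep_of_set p (b := {p i})
      · simp
      · intro x hx y hy _
        simp only [Finset.coe_singleton, Set.mem_singleton_iff] at hx hy
        rw [hx, hy]
      · exact (linearIndepOn_singleton_iff (R := ℂ) (v := id)).mpr (hp i)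
    obtain ⟨B, hsB, h1, h2⟩ := extend_idx p hm hess _ hsind
    exact ⟨B, hBmem' B h1 h2, hsB (Finset.mem_singleton_self i)⟩
  have h𝓑ne : 𝓑.Nonempty := by
    obtain ⟨B, hB, -⟩ := hcov ⟨0, hm⟩
    exact ⟨B, hB⟩
  set N : Fin m → ℕ := fun i => (𝓑.filter (fun B => i ∈ B)).card with hN
  have key : ∀ S : Finset (Fin m),
      ∑ i ∈ S, N i = ∑ B ∈ 𝓑, (S.filter (fun i => i ∈ B)).card := by
    intro S
    simp only [hN, Finset.card_filter]
    exact Finset.sum_comm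
  have htot : ∑ i, N i = 𝓑.card * (n + 1) := by
    rw [key Finset.univ]
    have : ∀ B ∈ 𝓑, (Finset.univ.filter (fun i : Fin m => i ∈ B)).card = n + 1 := by
      intro B hB
      have h1 : Finset.univ.filter (fun i : Fin m => i ∈ B) = B := by
        ext i; simp
      rw [h1, (hBmem B hB).1]
    rw [Finset.sum_congr rfl this, Finset.sum_const, smul_eq_mul]
  refine ⟨fun i => (N i : ℝ), ?_, ?_⟩
  · intro i
    obtain ⟨B, hB, hiB⟩ := hcov i
    have : 0 < N i := Finset.card_pos.mpr ⟨B, Finset.mem_filter.mpr ⟨hB, hiB⟩⟩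
    show (0 : ℝ) < (N i : ℝ)
    exact_mod_cast this
  intro W hWb hWt
  set d := Module.finrank ℂ W with hd
  have hd1 : 1 ≤ d := by
    rcases Nat.eq_zero_or_pos d with h | h
    · exact absurd (Submodule.finrank_eq_zero.mp h) hWb
    · exact h
  -- main natural-number inequality
  have hfilt : ∀ B : Finset (Fin m),
      (Finset.univ.filter (fun i => p i ∈ W)).filter (fun i => i ∈ B)
        = B.filter (fun i => p i ∈ W) := by
    intro B
    ext i
    simp [and_comm]
  have hnat : ∑ i ∈ Finset.univ.filter (fun i => p i ∈ W), N i < d * 𝓑.card := by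
    rw [key]
    have hre : ∀ B ∈ 𝓑,
        ((Finset.univ.filter (fun i => p i ∈ W)).filter (fun i => i ∈ B)).card
          = (B.filter (fun i => p i ∈ W)).card := fun B _ => by rw [hfilt B]
    rw [Finset.sum_congr rfl hre]
    by_cases hex : ∃ i, p i ∈ W
    · obtain ⟨B₀, hB₀c, hB₀i, hB₀s⟩ := strict_basis p hm hess hirr hWt hex
      have hB₀ : B₀ ∈ 𝓑 := hBmem' B₀ hB₀c hB₀i
      have hlt : ∑ B ∈ 𝓑, (B.filter (fun i => p i ∈ W)).card < ∑ B ∈ 𝓑, d := by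
        apply Finset.sum_lt_sum
        · intro B hB
          exact count_le p (hBmem B hB).2 W
        · exact ⟨B₀, hB₀, by omega⟩
      rwa [Finset.sum_const, smul_eq_mul, mul_comm] at hlt
    · push_neg at hex
      have hz : ∀ B ∈ 𝓑, (B.filter (fun i => p i ∈ W)).card = 0 := by
        intro B _
        rw [Finset.card_eq_zero, Finset.filter_eq_empty_iff]
        intro i _
        exact hex i
      rw [Finset.sum_congr rfl hz, Finset.sum_const, smul_eq_mul, mul_zero]
      have : 0 < 𝓑.card := Finset.card_pos.mpr h𝓑ne
      exact Nat.mul_pos hd1 this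
  -- convert to reals
  have hsum1 : ∑ i ∈ Finset.univ.filter (fun i => p i ∈ W), ((N i : ℝ))
      = ((∑ i ∈ Finset.univ.filter (fun i => p i ∈ W), N i : ℕ) : ℝ) := by
    push_cast; rfl
  have hsum2 : ∑ i : Fin m, ((N i : ℝ)) = ((𝓑.card * (n + 1) : ℕ) : ℝ) := by
    rw [← htot]; push_cast; rfl
  rw [hsum1, hsum2]
  have hne : ((n : ℝ) + 1) ≠ 0 := by positivity
  have hR : ((d : ℝ) / (n + 1)) * ((𝓑.card * (n + 1) : ℕ) : ℝ)
      = ((d * 𝓑.card : ℕ) : ℝ) := by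
    push_cast
    field_simp
  rw [hR]
  exact_mod_cast hnat
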